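/- Let G be a Roelcke precompact topological group with a basis of open subgroups at the identity and V ≤ G an open subgroup. Then Comm_G(Comm_G(V)) = Comm_G(V); moreover, if V₁, V₂ are open subgroups whose commensurators are commensurate, then Comm_G(V₁) = Comm_G(V₂). -/

import Mathlib

open Pointwise

section Aux

variable {G : Type*} [Group G]

open Subgroup

/-- `G` is covered by finitely many double cosets of `V`. -/
private def FinDC (V : Subgroup G) : Prop :=
  ∃ F : Finset G, ∀ g : G, ∃ f ∈ F, ∃ v ∈ V, ∃ w ∈ V, g = v * f * w

private lemma finDC_conj {V : Subgroup G} (h : FinDC V) (g : ConjAct G) : FinDC (g • V) := by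
  classical
  obtain ⟨F, hF⟩ := h
  refine ⟨F.image (fun f => g • f), fun x => ?_⟩
  obtain ⟨f, hf, v, hv, w, hw, hx⟩ := hF (g⁻¹ • x)
  refine ⟨g • f, Finset.mem_image_of_mem _ hf, g • v,
    Subgroup.smul_mem_pointwise_smul _ _ _ hv, g • w,
    Subgroup.smul_mem_pointwise_smul _ _ _ hw, ?_⟩
  have : x = g • (v * f * w) := by rw [← hx, smul_inv_smul]
  rw [this, smul_mul', smul_mul']

private lemma finDC_of_relindex {A V : Subgroup G} (hAV : A ≤ V)
    (hrel : A.relIndex V ≠ 0) (h : FinDC V) : FinDC A := by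
  classical
  obtain ⟨F, hF⟩ := h
  haveI : (A.subgroupOf V).FiniteIndex := ⟨hrel⟩
  haveI : Finite (V ⧸ A.subgroupOf V) := inferInstance
  haveI := Fintype.ofFinite (V ⧸ A.subgroupOf V)
  set R : Finset G :=
    Finset.image (fun q : V ⧸ A.subgroupOf V => ((Quotient.out q : V) : G)) Finset.univ with hRdef
  have hR : ∀ v ∈ V, ∃ r ∈ R, ∃ a ∈ A, v = r * a := by
    intro v hv
    set q : V ⧸ A.subgroupOf V := QuotientGroup.mk ⟨v, hv⟩ with hq
    refine ⟨((Quotient.out q : V) : G),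
      Finset.mem_image_of_mem _ (Finset.mem_univ q), ?_⟩
    have hout : QuotientGroup.mk (Quotient.out q) = q := QuotientGroup.out_eq' q
    have hmem : (Quotient.out q)⁻¹ * (⟨v, hv⟩ : V) ∈ A.subgroupOf V :=
      QuotientGroup.eq.mp (hout.trans hq)
    refine ⟨(((Quotient.out q)⁻¹ * (⟨v, hv⟩ : V) : V) : G),
      (Subgroup.mem_subgroupOf).mp hmem, ?_⟩
    push_cast
    group
  refine ⟨(R.image fun r => r⁻¹) * F * R, fun g => ?_⟩
  obtain ⟨f, hf, v, hv, w, hw, rfl⟩ := hF g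
  obtain ⟨r₂, hr₂, a₂, ha₂, hw2⟩ := hR w hw
  obtain ⟨r₁, hr₁, a₁, ha₁, hv1⟩ := hR v⁻¹ (inv_mem hv)
  have hv' : v = a₁⁻¹ * r₁⁻¹ := by
    have := congrArg (fun x => x⁻¹) hv1
    simpa [mul_inv_rev] using this
  refine ⟨r₁⁻¹ * f * r₂, ?_, a₁⁻¹, inv_mem ha₁, a₂, ha₂, ?_⟩
  · refine Finset.mul_mem_mul (Finset.mul_mem_mul ?_ hf) hr₂
    exact Finset.mem_image_of_mem _ hr₁
  · rw [hv', hw2]; group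

private lemma relindex_ne_zero_of_norm {A B : Subgroup G} (hfd : FinDC A)
    (hnorm : ∀ b ∈ B, ∀ x ∈ A, b * x * b⁻¹ ∈ A) : A.relIndex B ≠ 0 := by
  obtain ⟨F, hF⟩ := hfd
  suffices h : Finite (B ⧸ A.subgroupOf B) by
    exact @Subgroup.index_ne_zero_of_finite _ _ _ h
  have key : ∀ q : B ⧸ A.subgroupOf B, ∃ f ∈ F, ∃ a₁ ∈ A, ∃ a₂ ∈ A,
      ((Quotient.out q : B) : G) = a₁ * f * a₂ := fun q => hF _
  choose f hfF a₁ ha₁ a₂ ha₂ hq using key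
  apply Finite.of_injective (fun q => (⟨f q, hfF q⟩ : {x // x ∈ F}))
  intro q q' h
  have hf : f q = f q' := congrArg Subtype.val h
  set b : B := Quotient.out q with hb
  set b' : B := Quotient.out q' with hb'
  have h1 : (b : G) = a₁ q * f q * a₂ q := hq q
  have h2 : (b' : G) = a₁ q' * f q' * a₂ q' := hq q'
  have hbb : (b : G)⁻¹ * (b' : G) =
      ((b : G)⁻¹ * (a₁ q' * (a₁ q)⁻¹) * (b : G)) * ((a₂ q)⁻¹ * a₂ q') := by
    rw [h2, ← hf]
    have hfq : (f q : G) = (a₁ q)⁻¹ * (b : G) * (a₂ q)⁻¹ := by rw [h1]; group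
    rw [hfq]; group
  have hmem : (b : G)⁻¹ * (b' : G) ∈ A := by
    rw [hbb]
    refine mul_mem ?_ (mul_mem (inv_mem (ha₂ q)) (ha₂ q'))
    have : ((b : G)⁻¹) * (a₁ q' * (a₁ q)⁻¹) * ((b : G)⁻¹)⁻¹ ∈ A :=
      hnorm _ (inv_mem b.2) _ (mul_mem (ha₁ q') (inv_mem (ha₁ q)))
    simpa using this
  have : QuotientGroup.mk b = (QuotientGroup.mk b' : B ⧸ A.subgroupOf B) := by
    rw [QuotientGroup.eq]
    exact (Subgroup.mem_subgroupOf).mpr (by simpa using hmem)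
  rw [hb, hb'] at this
  rw [← QuotientGroup.out_eq' q, ← QuotientGroup.out_eq' q']
  exact this

private lemma smul_self_eq {M : Subgroup G} {m : G} (hm : m ∈ M) :
    ConjAct.toConjAct m • M = M := by
  ext x
  rw [Subgroup.mem_pointwise_smul_iff_inv_smul_mem]
  have : (ConjAct.toConjAct m)⁻¹ • x = m⁻¹ * x * m := by
    rw [← ConjAct.toConjAct_inv, ConjAct.toConjAct_smul]
    group
  rw [this]
  constructor
  · intro hx
    have := mul_mem (mul_mem hm hx) (inv_mem hm)
    simpa [mul_assoc] using this
  · intro hx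
    exact mul_mem (mul_mem (inv_mem hm) hx) hm

private lemma le_commensurator (V : Subgroup G) : V ≤ Commensurable.commensurator V := by
  intro v hv
  rw [Commensurable.commensurator_mem_iff, smul_self_eq hv]

private lemma commensurator_conj (V : Subgroup G) (g : G) :
    Commensurable.commensurator (ConjAct.toConjAct g • V) =
      ConjAct.toConjAct g • Commensurable.commensurator V := by
  ext x
  rw [Commensurable.commensurator_mem_iff, Subgroup.mem_pointwise_smul_iff_inv_smul_mem]
  have hsm : (ConjAct.toConjAct g)⁻¹ • x = g⁻¹ * x * g := by
    rw [← ConjAct.toConjAct_inv, ConjAct.toConjAct_smul]; group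
  rw [hsm, Commensurable.commensurator_mem_iff]
  rw [Commensurable.commensurable_conj ((ConjAct.toConjAct g)⁻¹)]
  rw [inv_smul_smul, smul_smul, smul_smul, ← ConjAct.toConjAct_inv,
    ← map_mul, ← map_mul]

private lemma conj_mem_iff (N : Subgroup G) (g x : G) :
    x ∈ ConjAct.toConjAct g • N ↔ g⁻¹ * x * g ∈ N := by
  rw [Subgroup.mem_pointwise_smul_iff_inv_smul_mem, ← ConjAct.toConjAct_inv,
    ConjAct.toConjAct_smul]
  group

/-- The key step: if the commensurator of `V` is commensurated by `g`,
and `V` has finitely many double cosets, then `g` commensurates `V`. -/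
private lemma mem_commensurator_of_comm {V : Subgroup G} (hfd : FinDC V) {g : G}
    (hg : Commensurable (ConjAct.toConjAct g • Commensurable.commensurator V)
      (Commensurable.commensurator V)) :
    g ∈ Commensurable.commensurator V := by
  classical
  set L := Commensurable.commensurator V with hL
  have hVL : V ≤ L := le_commensurator V
  -- the core of `V` in `L`
  set N : Subgroup G := ⨅ h : L, ConjAct.toConjAct (h : G) • V with hNdef
  have hN_mem : ∀ x : G, x ∈ N ↔ ∀ h : L, (h : G)⁻¹ * x * (h : G) ∈ V := by
    intro x
    rw [hNdef, Subgroup.mem_iInf]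
    exact forall_congr' fun h => conj_mem_iff V _ x
  have hN_le : N ≤ V := by
    intro x hx
    have := (hN_mem x).mp hx ⟨1, one_mem L⟩
    simpa using this
  have hN_norm : ∀ m ∈ L, ∀ x ∈ N, m * x * m⁻¹ ∈ N := by
    intro m hm x hx
    rw [hN_mem]
    intro h
    have hmh : m⁻¹ * (h : G) ∈ L := mul_mem (inv_mem hm) h.2
    have := (hN_mem x).mp hx ⟨m⁻¹ * (h : G), hmh⟩
    have heq : ((h : G))⁻¹ * (m * x * m⁻¹) * (h : G) =
        (m⁻¹ * (h : G))⁻¹ * x * (m⁻¹ * (h : G)) := by group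
    rw [heq]
    exact this
  -- `N` has finite index in `V`
  obtain ⟨F, hF⟩ := hfd
  have hNV : N.relIndex V ≠ 0 := by
    set Fl : Finset G := F.filter (fun f => f ∈ L) with hFl
    set K : {x // x ∈ Fl} → Subgroup ↥V :=
      fun f => (((ConjAct.toConjAct (f : G)) • V ⊓ V).subgroupOf V).normalCore with hK
    haveI hKfi : ∀ f : {x // x ∈ Fl}, (K f).FiniteIndex := by
      intro f
      have hfL : (f : G) ∈ L := (Finset.mem_filter.mp f.2).2
      have h1 : (ConjAct.toConjAct (f : G) • V).relIndex V ≠ 0 :=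
        ((Commensurable.commensurator_mem_iff V (f : G)).mp hfL).1
      have h2 : ((ConjAct.toConjAct (f : G)) • V ⊓ V).relIndex V ≠ 0 := by
        rwa [Subgroup.inf_relIndex_right]
      haveI : (((ConjAct.toConjAct (f : G)) • V ⊓ V).subgroupOf V).FiniteIndex := ⟨h2⟩
      rw [hK]
      exact Subgroup.finiteIndex_normalCore _
    set D : Subgroup ↥V := ⨅ f : {x // x ∈ Fl}, K f with hD
    haveI hDfi : D.FiniteIndex := Subgroup.finiteIndex_iInf hKfi
    have hDN : D.map V.subtype ≤ N := by
      rintro x ⟨y, hy, rfl⟩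
      rw [hN_mem]
      intro h
      obtain ⟨f, hf, v, hv, w, hw, hEq⟩ := hF (h : G)
      have hfL : f ∈ L := by
        have : f = v⁻¹ * (h : G) * w⁻¹ := by rw [hEq]; group
        rw [this]
        exact mul_mem (mul_mem (inv_mem (hVL hv)) h.2) (inv_mem (hVL hw))
      have hfFl : f ∈ Fl := Finset.mem_filter.mpr ⟨hf, hfL⟩
      have hyK : y ∈ K ⟨f, hfFl⟩ := (Subgroup.mem_iInf.mp hy) ⟨f, hfFl⟩
      have hconj : (⟨v, hv⟩ : V)⁻¹ * y * (⟨v, hv⟩ : V)⁻¹⁻¹ ∈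
          ((ConjAct.toConjAct f) • V ⊓ V).subgroupOf V := hyK (⟨v, hv⟩ : V)⁻¹
      have hvyv : v⁻¹ * (y : G) * v ∈ (ConjAct.toConjAct f) • V := by
        have := (Subgroup.mem_subgroupOf.mp hconj)
        have h' := this.1
        have h'' : v⁻¹ * (y : G) * v ∈ ((ConjAct.toConjAct f • V : Subgroup G) : Set G) := by
          simpa using h'
        exact h''
      have hfvy : f⁻¹ * (v⁻¹ * (y : G) * v) * f ∈ V := (conj_mem_iff V f _).mp hvyv
      have hfin : w⁻¹ * (f⁻¹ * (v⁻¹ * (y : G) * v) * f) * w ∈ V :=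
        mul_mem (mul_mem (inv_mem hw) hfvy) hw
      have heq : (h : G)⁻¹ * (V.subtype y) * (h : G) =
          w⁻¹ * (f⁻¹ * (v⁻¹ * (y : G) * v) * f) * w := by
        rw [hEq]; simp only [Subgroup.coe_subtype]; group
      rw [heq]
      exact hfin
    have hmaprel : (D.map V.subtype).relIndex V ≠ 0 := by
      have : (D.map V.subtype).subgroupOf V = D :=
        Subgroup.comap_map_eq_self_of_injective V.subtype_injective D
      have hrel : (D.map V.subtype).relIndex V = D.index := by
        rw [Subgroup.relIndex, this]
      rw [hrel]
      exact hDfi.index_ne_zero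
    intro h0
    have hdvd : N.relIndex V ∣ (D.map V.subtype).relIndex V :=
      Subgroup.relIndex_dvd_of_le_left V hDN
    rw [h0] at hdvd
    exact hmaprel (Nat.eq_zero_of_zero_dvd hdvd)
  have cNV : Commensurable N V :=
    ⟨hNV, by rw [Subgroup.relIndex_eq_one.mpr hN_le]; exact one_ne_zero⟩
  -- setup of the intersections
  set gL : Subgroup G := ConjAct.toConjAct g • L with hgL
  set gN : Subgroup G := ConjAct.toConjAct g • N with hgN
  set gV : Subgroup G := ConjAct.toConjAct g • V with hgV
  set M : Subgroup G := gL ⊓ L with hM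
  set A : Subgroup G := N ⊓ M with hA
  set B : Subgroup G := gN ⊓ M with hB
  have hNL : N ≤ L := hN_le.trans hVL
  have hgNgV : gN ≤ gV := Subgroup.pointwise_smul_le_pointwise_smul_iff.mpr hN_le
  have hgNgL : gN ≤ gL := Subgroup.pointwise_smul_le_pointwise_smul_iff.mpr hNL
  have hgVgL : gV ≤ gL := Subgroup.pointwise_smul_le_pointwise_smul_iff.mpr hVL
  have hML : M.relIndex L ≠ 0 := by
    rw [hM, Subgroup.inf_relIndex_right]; exact hg.1
  have hMgL : M.relIndex gL ≠ 0 := by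
    rw [hM, Subgroup.inf_relIndex_left]; exact hg.2
  have hMN : M.relIndex N ≠ 0 := by
    intro h0
    exact hML (Subgroup.relIndex_eq_zero_of_le_right hNL h0)
  have hMgN : M.relIndex gN ≠ 0 := by
    intro h0
    exact hMgL (Subgroup.relIndex_eq_zero_of_le_right hgNgL h0)
  have hAN : A.relIndex N ≠ 0 := by
    rw [hA, Subgroup.inf_relIndex_left]; exact hMN
  have hBgN : B.relIndex gN ≠ 0 := by
    rw [hB, Subgroup.inf_relIndex_left]; exact hMgN
  have cgNgV : Commensurable gN gV := (Commensurable.commensurable_conj _).mp cNV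
  have hAV : A.relIndex V ≠ 0 := by
    have := Subgroup.relIndex_mul_relIndex A N V inf_le_left hN_le
    rw [← this]
    exact mul_ne_zero hAN hNV
  have hBgV : B.relIndex gV ≠ 0 := by
    have := Subgroup.relIndex_mul_relIndex B gN gV inf_le_left hgNgV
    rw [← this]
    exact mul_ne_zero hBgN cgNgV.1
  have hfdA : FinDC A := finDC_of_relindex (inf_le_left.trans hN_le) hAV ⟨F, hF⟩
  have hfdB : FinDC B :=
    finDC_of_relindex (inf_le_left.trans hgNgV) hBgV (finDC_conj ⟨F, hF⟩ _)
  -- elements of M normalize both A and B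
  have hMsubL : M ≤ L := inf_le_right
  have hMsubgL : M ≤ gL := inf_le_left
  have hMnormM : ∀ m ∈ M, ∀ x ∈ M, m * x * m⁻¹ ∈ M := fun m hm x hx =>
    mul_mem (mul_mem hm hx) (inv_mem hm)
  have hMnormA : ∀ m ∈ M, ∀ x ∈ A, m * x * m⁻¹ ∈ A := by
    intro m hm x hx
    exact ⟨hN_norm m (hMsubL hm) x hx.1, hMnormM m hm x hx.2⟩
  have hMnormB : ∀ m ∈ M, ∀ x ∈ B, m * x * m⁻¹ ∈ B := by
    intro m hm x hx
    refine ⟨?_, hMnormM m hm x hx.2⟩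
    have hmL : g⁻¹ * m * g ∈ L := (conj_mem_iff L g m).mp (hMsubgL hm)
    have hxN : g⁻¹ * x * g ∈ N := (conj_mem_iff N g x).mp hx.1
    have hmem : g⁻¹ * (m * x * m⁻¹) * g ∈ N := by
      have heq : g⁻¹ * (m * x * m⁻¹) * g =
          (g⁻¹ * m * g) * (g⁻¹ * x * g) * (g⁻¹ * m * g)⁻¹ := by group
      rw [heq]
      exact hN_norm _ hmL _ hxN
    exact (conj_mem_iff N g (m * x * m⁻¹)).mpr hmem
  have hAB : A.relIndex B ≠ 0 :=
    relindex_ne_zero_of_norm hfdA (fun b hb => hMnormA b hb.2)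
  have hBA : B.relIndex A ≠ 0 :=
    relindex_ne_zero_of_norm hfdB (fun a ha => hMnormB a ha.2)
  have cAB : Commensurable A B := ⟨hAB, hBA⟩
  have cAN : Commensurable A N :=
    ⟨hAN, by rw [Subgroup.relIndex_eq_one.mpr (inf_le_left : A ≤ N)]; exact one_ne_zero⟩
  have cBgN : Commensurable B gN :=
    ⟨hBgN, by rw [Subgroup.relIndex_eq_one.mpr (inf_le_left : B ≤ gN)]; exact one_ne_zero⟩
  rw [hL, Commensurable.commensurator_mem_iff]
  exact (cgNgV.symm.trans (cBgN.symm.trans (cAB.symm.trans (cAN.trans cNV))))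

end Aux

open Subgroup

/-- A topological group is Roelcke precompact if for every neighborhood `U` of the identity
there is a finite set `F` with `G = U F U`. -/
def RoelckePrecompact (G : Type*) [Group G] [TopologicalSpace G] : Prop :=
  ∀ U ∈ nhds (1 : G), ∃ F : Finset G, U * (F : Set G) * U = Set.univ

/-- In a Roelcke precompact group with a basis of open subgroups at the identity, the
commensurator of an open subgroup is its own commensurator; moreover if the commensurators
of two open subgroups are commensurate, they are equal. -/
theorem commensurator_idem_and_unique {G : Type*} [Group G] [TopologicalSpace G]
    [IsTopologicalGroup G]
    (hbasis : ∀ U ∈ nhds (1 : G), ∃ W : Subgroup G, IsOpen (W : Set G) ∧ (W : Set G) ⊆ U)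
    (hG : RoelckePrecompact G) :
    (∀ V : Subgroup G, IsOpen (V : Set G) →
      Subgroup.Commensurable.commensurator (Subgroup.Commensurable.commensurator V) =
        Subgroup.Commensurable.commensurator V) ∧
    ∀ V₁ V₂ : Subgroup G, IsOpen (V₁ : Set G) → IsOpen (V₂ : Set G) →
      Subgroup.Commensurable (Subgroup.Commensurable.commensurator V₁) (Subgroup.Commensurable.commensurator V₂) →
      Subgroup.Commensurable.commensurator V₁ = Subgroup.Commensurable.commensurator V₂ := by
  have hfd : ∀ V : Subgroup G, IsOpen (V : Set G) → FinDC V := by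
    intro V hV
    obtain ⟨F, hF⟩ := hG (V : Set G) (hV.mem_nhds V.one_mem)
    refine ⟨F, fun g => ?_⟩
    have hg : g ∈ (V : Set G) * (F : Set G) * (V : Set G) := by rw [hF]; trivial
    obtain ⟨x, hx, w, hw, rfl⟩ := hg
    obtain ⟨v, hv, f, hf, rfl⟩ := hx
    exact ⟨f, hf, v, hv, w, hw, rfl⟩
  have part1 : ∀ V : Subgroup G, IsOpen (V : Set G) →
      Commensurable.commensurator (Commensurable.commensurator V) =
        Commensurable.commensurator V := by
    intro V hV
    ext g
    constructor
    · intro hgg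
      exact mem_commensurator_of_comm (hfd V hV)
        ((Commensurable.commensurator_mem_iff _ g).mp hgg)
    · intro hgL
      rw [Commensurable.commensurator_mem_iff]
      have h1 : Commensurable.commensurator (ConjAct.toConjAct g • V) =
          Commensurable.commensurator V :=
        Commensurable.eq ((Commensurable.commensurator_mem_iff V g).mp hgL)
      have h2 : ConjAct.toConjAct g • Commensurable.commensurator V =
          Commensurable.commensurator V := by
        rw [← commensurator_conj, h1]
      rw [h2]
  refine ⟨part1, fun V₁ V₂ h1 h2 hc => ?_⟩
  have e := Commensurable.eq hc
  rw [part1 V₁ h1, part1 V₂ h2] at e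
  exact e
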